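/- Post-measurement states of a UR_ns classical–quantum state are classical–quantum states of unsteerable assemblages: Let {ς_{a0a1|x0x1}} be a UR_ns broadcasting-scenario assemblage on H_{B0} ⊗ H_{B1}, let π_0, π_1 be probability distributions on the input set X, and let σ_{ZW} = Σ π_0(x0)π_1(x1) |x0 x1⟩⟨x0 x1| ⊗ |a0 a1⟩⟨a0 a1| ⊗ ς_{a0a1|x0x1} be the associated classical–quantum state. Let {E_i} be a POVM on H_{B0} and, for k = (x0', a0', i), set F_k = |x0'⟩⟨x0'| ⊗ |a0'⟩⟨a0'| ⊗ E_i, acting on the X0, A0 and B0 tensor factors. Then for every k with tr((F_k ⊗ Id) σ_{ZW}) > 0, the normalized post-measurement state σ_W^k = tr_Z((F_k ⊗ Id) σ_{ZW}) / tr((F_k ⊗ Id) σ_{ZW}) (tr_Z denoting the partial trace over the X0, A0, B0 factors) is the classical–quantum state, with distribution π_1, of an unsteerable assemblage on H_{B1}: explicitly, σ_W^k = Σ_{λ',x1,a1} π_1(x1) r_k(λ') q^k_{λ'}(a1|x1) |x1⟩⟨x1| ⊗ |a1⟩⟨a1| ⊗ σ^{λ',k} for some probability distribution r_k on a finite set,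 conditional probability distributions q^k_{λ'}(a1|x1), and density operators σ^{λ',k} on H_{B1}. -/

import Mathlib

open scoped ENNReal Matrix ComplexOrder
open Classical

noncomputable section

/-- A probability distribution on a finite type. -/
def IsProbDist {Λ : Type*} [Fintype Λ] (r : Λ → ℝ) : Prop :=
  (∀ l, 0 ≤ r l) ∧ ∑ l, r l = 1

/-- A conditional probability distribution `p o i = p(o|i)`. -/
def IsCondDist {O I : Type*} [Fintype O] (p : O → I → ℝ) : Prop :=
  (∀ o i, 0 ≤ p o i) ∧ ∀ i, ∑ o, p o i = 1

/-- A bipartite box `P a b x y = P(a,b|x,y)`. -/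
def IsBox {A B X Y : Type*} [Fintype A] [Fintype B] (P : A → B → X → Y → ℝ) : Prop :=
  (∀ a b x y, 0 ≤ P a b x y) ∧ ∀ x y, ∑ a, ∑ b, P a b x y = 1

/-- Non-signalling bipartite box. -/
def NonSignalling {A B X Y : Type*} [Fintype A] [Fintype B] (P : A → B → X → Y → ℝ) : Prop :=
  (∀ a x y y', ∑ b, P a b x y = ∑ b, P a b x y') ∧
  (∀ b x x' y, ∑ a, P a b x y = ∑ a, P a b x' y)

/-- A density operator on a finite-dimensional Hilbert space (as a matrix). -/
def IsDensity {d : Type*} [Fintype d] [DecidableEq d] (ρ : Matrix d d ℂ) : Prop :=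
  ρ.PosSemidef ∧ ρ.trace = 1

/-- An assemblage: positive semidefinite operators `ϱ a x = ϱ_{a|x}` with
`Σ_a tr(ϱ_{a|x}) = 1` for every `x`. -/
def IsAssemblage {A X d : Type*} [Fintype A] [Fintype d] [DecidableEq d]
    (ϱ : A → X → Matrix d d ℂ) : Prop :=
  (∀ a x, (ϱ a x).PosSemidef) ∧ ∀ x, ∑ a, (ϱ a x).trace = 1

/-- Non-signalling assemblage: the reduced state `Σ_a ϱ_{a|x}` does not depend on `x`. -/
def NSAssemblage {A X d : Type*} [Fintype A]
    (ϱ : A → X → Matrix d d ℂ) : Prop :=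
  ∀ x x', ∑ a, ϱ a x = ∑ a, ϱ a x'

/-- Unsteerable assemblage: admits a local hidden state model. -/
def Unsteerable {A X d : Type*} [Fintype A] [Fintype d] [DecidableEq d]
    (ϱ : A → X → Matrix d d ℂ) : Prop :=
  ∃ (m : ℕ) (r : Fin m → ℝ) (p : Fin m → A → X → ℝ) (ρs : Fin m → Matrix d d ℂ),
    IsProbDist r ∧ (∀ l, IsCondDist (p l)) ∧ (∀ l, IsDensity (ρs l)) ∧
    ∀ a x, ϱ a x = ∑ l, (r l * p l a x) • ρs l

/-- Partial trace over the second tensor factor. -/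
def trB1 {d₀ d₁ : Type*} [Fintype d₁] (M : Matrix (d₀ × d₁) (d₀ × d₁) ℂ) :
    Matrix d₀ d₀ ℂ :=
  fun i j => ∑ b, M (i, b) (j, b)

/-- Partial trace over the first tensor factor. -/
def trB0 {d₀ d₁ : Type*} [Fintype d₀] (M : Matrix (d₀ × d₁) (d₀ × d₁) ℂ) :
    Matrix d₁ d₁ ℂ :=
  fun i j => ∑ b, M (b, i) (b, j)

/-- A broadcasting-scenario assemblage `ϱ2` is a broadcast of the assemblage `ϱ'`. -/
def IsBroadcastAssemblage {A X d : Type*} [Fintype A] [Fintype d]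
    (ϱ2 : (A × A) → (X × X) → Matrix (d × d) (d × d) ℂ)
    (ϱ' : A → X → Matrix d d ℂ) : Prop :=
  (∀ a0 x0 x1, ∑ a1, trB1 (ϱ2 (a0, a1) (x0, x1)) = ϱ' a0 x0) ∧
  (∀ a1 x0 x1, ∑ a0, trB0 (ϱ2 (a0, a1) (x0, x1)) = ϱ' a1 x1)

/-- Non-signalling broadcasting-scenario assemblage: both marginal assemblages
are well defined. -/
def NSBroadcastAssemblage {A X d : Type*} [Fintype A] [Fintype d]
    (ϱ2 : (A × A) → (X × X) → Matrix (d × d) (d × d) ℂ) : Prop :=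
  (∀ a0 x0 x1 x1', ∑ a1, trB1 (ϱ2 (a0, a1) (x0, x1)) = ∑ a1, trB1 (ϱ2 (a0, a1) (x0, x1'))) ∧
  (∀ a1 x0 x0' x1, ∑ a0, trB0 (ϱ2 (a0, a1) (x0, x1)) = ∑ a0, trB0 (ϱ2 (a0, a1) (x0', x1)))

/-- Unsteerable-realistic non-signalling (UR_ns) broadcasting-scenario assemblage. -/
def IsURns {A X d : Type*} [Fintype A] [Fintype X] [Fintype d] [DecidableEq d]
    (ς : (A × A) → (X × X) → Matrix (d × d) (d × d) ℂ) : Prop :=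
  ∃ (m : ℕ) (r : Fin m → ℝ) (q : Fin m → A → A → X → X → ℝ)
    (σ : Fin m → Matrix (d × d) (d × d) ℂ),
    IsProbDist r ∧
    (∀ l, IsBox (q l) ∧ NonSignalling (q l)) ∧
    (∀ l, IsDensity (σ l)) ∧
    ∀ aa xx, ς aa xx = ∑ l, (r l * q l aa.1 aa.2 xx.1 xx.2) • σ l

/-- The classical-quantum state `Σ_{x,a} π(x) |x⟩⟨x| ⊗ |a⟩⟨a| ⊗ ϱ_{a|x}`
associated to an assemblage and an input distribution. -/
def cqState {X A d : Type*} (π : X → ℝ) (ϱ : A → X → Matrix d d ℂ) :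
    Matrix (X × A × d) (X × A × d) ℂ :=
  fun p q =>
    if p.1 = q.1 ∧ p.2.1 = q.2.1 then (π p.1 : ℂ) * ϱ p.2.1 p.1 p.2.2 q.2.2 else 0

/-- Logarithm of a Hermitian matrix via its spectral decomposition (with the
convention `log 0 = 0` on the kernel); junk value `0` on non-Hermitian matrices. -/
def matLog {d : Type*} [Fintype d] [DecidableEq d] (M : Matrix d d ℂ) : Matrix d d ℂ :=
  if h : M.IsHermitian then
    (h.eigenvectorUnitary : Matrix d d ℂ) *
      Matrix.diagonal (fun i => (Real.log (h.eigenvalues i) : ℂ)) *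
      star (h.eigenvectorUnitary : Matrix d d ℂ)
  else 0

/-- Umegaki quantum relative entropy `S_Q(ρ‖σ) = tr[ρ(log ρ − log σ)] ∈ [0,∞]`,
infinite when the support of `ρ` is not contained in the support of `σ`. -/
def qRelEnt {d : Type*} [Fintype d] [DecidableEq d] (ρ σ : Matrix d d ℂ) : ℝ≥0∞ :=
  if ∀ v : d → ℂ, σ.mulVec v = 0 → ρ.mulVec v = 0 then
    ENNReal.ofReal ((ρ * (matLog ρ - matLog σ)).trace.re)
  else ⊤

/-- KL-divergence for assemblages: supremum over input distributions of the quantum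
relative entropy of the associated classical-quantum states. -/
def SA {X A d : Type*} [Fintype X] [Fintype A] [Fintype d] [DecidableEq X] [DecidableEq A]
    [DecidableEq d] (ϱ ς : A → X → Matrix d d ℂ) : ℝ≥0∞ :=
  ⨆ (π : X → ℝ) (_ : IsProbDist π), qRelEnt (cqState π ϱ) (cqState π ς)

/-- Relative entropy of steering of an assemblage: infimum of `SA` over
unsteerable assemblages. -/
def EA {X A d : Type*} [Fintype X] [Fintype A] [Fintype d] [DecidableEq X] [DecidableEq A]
    [DecidableEq d] (ϱ : A → X → Matrix d d ℂ) : ℝ≥0∞ :=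
  ⨅ (ς : A → X → Matrix d d ℂ) (_ : Unsteerable ς), SA ϱ ς

/-- Relative entropy of steering of a broadcasting-scenario assemblage: infimum of `SA`
over UR_ns assemblages. -/
def EA2 {X A d : Type*} [Fintype X] [Fintype A] [Fintype d] [DecidableEq X] [DecidableEq A]
    [DecidableEq d] (ϱ2 : (A × A) → (X × X) → Matrix (d × d) (d × d) ℂ) : ℝ≥0∞ :=
  ⨅ (ς : (A × A) → (X × X) → Matrix (d × d) (d × d) ℂ) (_ : IsURns ς), SA ϱ2 ς

/-- The Choi matrix of a linear map on matrices. -/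
def choiMatrix {d e : Type*} [Fintype d] [DecidableEq d]
    (E : Matrix d d ℂ →ₗ[ℂ] Matrix e e ℂ) : Matrix (e × d) (e × d) ℂ :=
  fun p q => E (Matrix.single p.2 q.2 1) p.1 q.1

/-- Completely positive trace-preserving map, characterized via Choi's theorem. -/
def IsCPTP {d e : Type*} [Fintype d] [DecidableEq d] [Fintype e] [DecidableEq e]
    (E : Matrix d d ℂ →ₗ[ℂ] Matrix e e ℂ) : Prop :=
  (choiMatrix E).PosSemidef ∧ ∀ M, (E M).trace = M.trace

/-- An LOSR transformation of assemblages from the scenario `(X, A; H_B)` to the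
broadcasting scenario, given by shared randomness `r`, classical pre- and
post-processings `I`, `O`, and CPTP maps `E λ`. -/
structure AssemblageLOSR (X A : Type*) (d : Type*)
    [Fintype X] [Fintype A] [Fintype d] [DecidableEq d] where
  nΛ : ℕ
  nC : ℕ
  r : Fin nΛ → ℝ
  I : Fin nC → X → X → X → Fin nΛ → ℝ
  O : A → A → A → Fin nC → ℝ
  E : Fin nΛ → (Matrix d d ℂ →ₗ[ℂ] Matrix (d × d) (d × d) ℂ)
  hr : IsProbDist r
  hI : ∀ x0 x1 l, (∀ c x, 0 ≤ I c x x0 x1 l) ∧ ∑ c, ∑ x, I c x x0 x1 l = 1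
  hO : ∀ a c, (∀ a0 a1, 0 ≤ O a0 a1 a c) ∧ ∑ a0, ∑ a1, O a0 a1 a c = 1
  hE : ∀ l, IsCPTP (E l)

/-- The action of an LOSR transformation of assemblages:
`M(ϱ)_{a0a1|x0x1} = Σ_{λ,c,a,x} r(λ) I(c,x|x0,x1,λ) O(a0,a1|a,c) E_λ(ϱ_{a|x})`. -/
def AssemblageLOSR.apply {X A d : Type*}
    [Fintype X] [Fintype A] [Fintype d] [DecidableEq d]
    (T : AssemblageLOSR X A d) (ϱ : A → X → Matrix d d ℂ) :
    (A × A) → (X × X) → Matrix (d × d) (d × d) ℂ :=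
  fun aa xx => ∑ l, ∑ c, ∑ a, ∑ x,
    (T.r l * T.I c x xx.1 xx.2 l * T.O aa.1 aa.2 a c) • T.E l (ϱ a x)

/-- A UR_ns-LOSR transformation: an LOSR transformation of assemblages mapping every
unsteerable assemblage to a UR_ns assemblage. -/
def AssemblageLOSR.IsURnsLOSR {X A d : Type*}
    [Fintype X] [Fintype A] [Fintype d] [DecidableEq d]
    (T : AssemblageLOSR X A d) : Prop :=
  ∀ ϱ : A → X → Matrix d d ℂ, IsAssemblage ϱ → Unsteerable ϱ → IsURns (T.apply ϱ)

end

noncomputable section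

/-- A POVM on a finite-dimensional Hilbert space. -/
def IsPOVM {ι d : Type*} [Fintype ι] [Fintype d] [DecidableEq d]
    (E : ι → Matrix d d ℂ) : Prop :=
  (∀ i, (E i).PosSemidef) ∧ ∑ i, E i = 1

/-- The operator `F_k ⊗ Id = |x0'⟩⟨x0'| ⊗ |a0'⟩⟨a0'| ⊗ E_i ⊗ Id` acting on the `X0`, `A0`,
`B0` factors of the broadcasting-scenario classical-quantum space. -/
def FkId {X A d : Type*} [DecidableEq X] [DecidableEq A]
    (x0' : X) (a0' : A) (Ei : Matrix d d ℂ) :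
    Matrix ((X × X) × (A × A) × (d × d)) ((X × X) × (A × A) × (d × d)) ℂ :=
  fun p q =>
    if p.1.1 = x0' ∧ q.1.1 = x0' ∧ p.2.1.1 = a0' ∧ q.2.1.1 = a0' ∧
        p.1.2 = q.1.2 ∧ p.2.1.2 = q.2.1.2 ∧ p.2.2.2 = q.2.2.2
    then Ei p.2.2.1 q.2.2.1 else 0

/-- Partial trace over the `X0`, `A0` and `B0` tensor factors. -/
def traceOutZ {X A d : Type*} [Fintype X] [Fintype A] [Fintype d]
    (M : Matrix ((X × X) × (A × A) × (d × d)) ((X × X) × (A × A) × (d × d)) ℂ) :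
    Matrix (X × A × d) (X × A × d) ℂ :=
  fun p q => ∑ x0, ∑ a0, ∑ b0,
    M ((x0, p.1), (a0, p.2.1), (b0, p.2.2)) ((x0, q.1), (a0, q.2.1), (b0, q.2.2))


section AuxLemmas

open Finset

lemma aux_real_smul_mat {n : Type*} (c : ℝ) (M : Matrix n n ℂ) :
    c • M = ((c : ℂ)) • M := by
  ext i j; simp [Complex.real_smul]

lemma aux_psd_real_smul {n : Type*} [Fintype n] {c : ℝ} {M : Matrix n n ℂ}
    (hc : 0 ≤ c) (hM : M.PosSemidef) : (c • M).PosSemidef := by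
  rw [aux_real_smul_mat]
  constructor
  · rw [Matrix.IsHermitian, Matrix.conjTranspose_smul, hM.1.eq]
    congr 1
    simp [Complex.conj_ofReal]
  · intro x
    exact (hM.smul (a := (c : ℂ)) (Complex.zero_le_real.2 hc)).2 x

lemma aux_psd_sum {n ι : Type*} [Fintype n] (s : Finset ι) (f : ι → Matrix n n ℂ)
    (h : ∀ i ∈ s, (f i).PosSemidef) : (∑ i ∈ s, f i).PosSemidef := by
  classical
  induction s using Finset.induction with
  | empty => simpa using Matrix.PosSemidef.zero
  | insert a s hi ih =>
      rw [Finset.sum_insert hi]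
      exact Matrix.PosSemidef.add (h _ (Finset.mem_insert_self _ _))
        (ih fun i hi' => h i (Finset.mem_insert_of_mem hi'))

lemma aux_trace_eq_re {n : Type*} [Fintype n] {M : Matrix n n ℂ}
    (hM : M.IsHermitian) : M.trace = (M.trace.re : ℂ) := by
  have := Matrix.trace_conjTranspose M
  rw [hM.eq] at this
  exact ((Complex.conj_eq_iff_re).mp this.symm).symm

open scoped MatrixOrder in
lemma aux_psd_exists_mul_self {n : Type*} [Fintype n] [DecidableEq n]
    {M : Matrix n n ℂ} (hM : M.PosSemidef) : ∃ B : Matrix n n ℂ, M = Bᴴ * B := by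
  obtain ⟨X, hX, -, hXX⟩ :=
    CFC.exists_sqrt_of_isSelfAdjoint_of_quasispectrumRestricts hM.isHermitian
      (QuasispectrumRestricts.nnreal_of_nonneg hM.nonneg)
  refine ⟨X, ?_⟩
  rw [← hXX]
  have : Xᴴ = X := hX
  rw [this]

lemma aux_psd_trace_re_nonneg {n : Type*} [Fintype n] [DecidableEq n]
    {M : Matrix n n ℂ} (hM : M.PosSemidef) : 0 ≤ M.trace.re := by
  obtain ⟨B, rfl⟩ := aux_psd_exists_mul_self hM
  have : (Bᴴ * B).trace = ∑ j, ∑ i, (starRingEnd ℂ) (B i j) * B i j := by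
    simp [Matrix.trace, Matrix.diag, Matrix.mul_apply, Matrix.conjTranspose_apply]
  rw [this]
  simp only [Complex.re_sum]
  refine Finset.sum_nonneg fun j _ => Finset.sum_nonneg fun i _ => ?_
  rw [Complex.mul_re]
  simp only [Complex.conj_re, Complex.conj_im, neg_mul, sub_neg_eq_add]
  nlinarith [sq_nonneg (B i j).re, sq_nonneg (B i j).im]

lemma aux_psd_eq_zero_of_trace_re {n : Type*} [Fintype n] [DecidableEq n]
    {M : Matrix n n ℂ} (hM : M.PosSemidef) (h : M.trace.re = 0) : M = 0 := by
  obtain ⟨B, rfl⟩ := aux_psd_exists_mul_self hM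
  suffices hB : B = 0 by simp [hB]
  have htr : (Bᴴ * B).trace = ∑ j, ∑ i, (starRingEnd ℂ) (B i j) * B i j := by
    simp [Matrix.trace, Matrix.diag, Matrix.mul_apply, Matrix.conjTranspose_apply]
  rw [htr] at h
  simp only [Complex.re_sum] at h
  have hterm : ∀ i j : n, 0 ≤ ((starRingEnd ℂ) (B i j) * B i j).re := by
    intro i j
    rw [Complex.mul_re]
    simp only [Complex.conj_re, Complex.conj_im, neg_mul, sub_neg_eq_add]
    nlinarith [sq_nonneg (B i j).re, sq_nonneg (B i j).im]
  have hnn : ∀ j ∈ (Finset.univ : Finset n),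
      0 ≤ ∑ i, ((starRingEnd ℂ) (B i j) * B i j).re :=
    fun j _ => Finset.sum_nonneg fun i _ => hterm i j
  ext i j
  have h1 := (Finset.sum_eq_zero_iff_of_nonneg hnn).mp h j (Finset.mem_univ j)
  have h2 := (Finset.sum_eq_zero_iff_of_nonneg (fun i _ => hterm i j)).mp h1 i
    (Finset.mem_univ i)
  rw [Complex.mul_re] at h2
  simp only [Complex.conj_re, Complex.conj_im, neg_mul, sub_neg_eq_add] at h2
  have hre : (B i j).re = 0 ∧ (B i j).im = 0 := by
    constructor <;> nlinarith [sq_nonneg (B i j).re, sq_nonneg (B i j).im]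
  simp [Matrix.zero_apply, Complex.ext_iff, hre.1, hre.2]

lemma aux_psd_tau {d : Type*} [Fintype d] [DecidableEq d] {Ei : Matrix d d ℂ}
    (hEi : Ei.PosSemidef) {σ : Matrix (d × d) (d × d) ℂ} (hσ : σ.PosSemidef) :
    (Matrix.of fun B1 E1 => ∑ b0, ∑ c0, Ei b0 c0 * σ (c0, B1) (b0, E1)).PosSemidef := by
  obtain ⟨C, hC⟩ := aux_psd_exists_mul_self hEi
  set V : d → Matrix (d × d) d ℂ :=
    fun k => Matrix.of (fun p B' => if p.2 = B' then (starRingEnd ℂ) (C k p.1) else 0) with hV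
  have key : (Matrix.of fun B1 E1 => ∑ b0, ∑ c0, Ei b0 c0 * σ (c0, B1) (b0, E1))
      = ∑ k, (V k)ᴴ * σ * (V k) := by
    ext B1 E1
    rw [Matrix.sum_apply]
    simp only [Matrix.mul_apply, Matrix.conjTranspose_apply, Matrix.of_apply, hV,
      Fintype.sum_prod_type, hC, starRingEnd_apply, apply_ite (star : ℂ → ℂ),
      star_zero, star_star]
    simp only [ite_mul, zero_mul, mul_ite, mul_zero]
    simp only [Finset.sum_ite_eq, Finset.sum_ite_eq', Finset.mem_univ, if_true]
    simp only [Finset.sum_mul]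
    rw [show ∀ (f : d → d → d → ℂ), (∑ x, ∑ y, ∑ z, f x y z) = ∑ z, ∑ x, ∑ y, f x y z from
      fun f => (Finset.sum_congr rfl fun x _ => Finset.sum_comm).trans Finset.sum_comm]
    refine Finset.sum_congr rfl fun k _ => Finset.sum_congr rfl fun b0 _ =>
      Finset.sum_congr rfl fun c0 _ => ?_
    ring
  rw [key]
  exact aux_psd_sum _ _ fun k _ => hσ.conjTranspose_mul_mul_same (V k)

lemma aux_K1 {X A d : Type*} [Fintype X] [Fintype A] [Fintype d]
    [DecidableEq X] [DecidableEq A] [DecidableEq d]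
    (ς2 : (A × A) → (X × X) → Matrix (d × d) (d × d) ℂ)
    (π0 π1 : X → ℝ) (x0' : X) (a0' : A) (Ei : Matrix d d ℂ)
    (X1 Y1 : X) (A1 C1 : A) (B1 E1 : d) :
    traceOutZ (FkId x0' a0' Ei * cqState (fun xx : X × X => π0 xx.1 * π1 xx.2) ς2)
      (X1, A1, B1) (Y1, C1, E1) =
    if X1 = Y1 ∧ A1 = C1 then
      ((π0 x0' * π1 X1 : ℝ) : ℂ) *
        (∑ b0, ∑ c0, Ei b0 c0 * ς2 (a0', A1) (x0', X1) (c0, B1) (b0, E1))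
    else 0 := by
  classical
  simp only [traceOutZ, Matrix.mul_apply, FkId, cqState, Fintype.sum_prod_type]
  simp only [ite_mul, zero_mul, mul_ite, mul_zero, Prod.mk.injEq]
  trans (∑ b0 : d, ∑ c0 : d, if X1 = Y1 then if A1 = C1 then
      Ei b0 c0 * (((π0 x0' * π1 Y1 : ℝ) : ℂ) * ς2 (a0', C1) (x0', Y1) (c0, B1) (b0, E1))
      else 0 else 0)
  · refine (Fintype.sum_eq_single x0' fun b hb => by simp [hb]).trans ?_
    refine (Fintype.sum_eq_single a0' fun b hb => by simp [hb]).trans ?_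
    refine Finset.sum_congr rfl fun b0 _ => ?_
    refine (Fintype.sum_eq_single x0' fun b hb => by simp [hb]).trans ?_
    refine (Fintype.sum_eq_single Y1 fun b hb => by simp [hb]).trans ?_
    refine (Fintype.sum_eq_single a0' fun b hb => by simp [hb]).trans ?_
    refine (Fintype.sum_eq_single C1 fun b hb => by simp [hb]).trans ?_
    refine Finset.sum_congr rfl fun c0 _ => ?_
    refine (Fintype.sum_eq_single B1 fun b hb => by simp [Ne.symm hb]).trans ?_
    simp [ite_and]
  · by_cases h1 : X1 = Y1 <;> by_cases h2 : A1 = C1 <;>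
      simp [h1, h2, Finset.mul_sum] <;>
      exact Finset.sum_congr rfl fun _ _ => Finset.sum_congr rfl fun _ _ => by ring

lemma aux_trace_eq_sum_traceOutZ {X A d : Type*} [Fintype X] [Fintype A] [Fintype d]
    (M : Matrix ((X × X) × (A × A) × (d × d)) ((X × X) × (A × A) × (d × d)) ℂ) :
    M.trace = ∑ w : X × A × d, traceOutZ M w w := by
  classical
  rw [Matrix.trace,
    ← Equiv.sum_comp (⟨fun p => ((p.2.1, p.1.1), (p.2.2.1, p.1.2.1), (p.2.2.2, p.1.2.2)),
      fun q => ((q.1.2, q.2.1.2, q.2.2.2), (q.1.1, q.2.1.1, q.2.2.1)),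
      fun p => rfl, fun q => rfl⟩ :
      ((X × A × d) × (X × A × d)) ≃ ((X × X) × (A × A) × (d × d))) M.diag,
    Fintype.sum_prod_type]
  refine Finset.sum_congr rfl fun w _ => ?_
  simp [traceOutZ, Fintype.sum_prod_type, Matrix.diag, Equiv.coe_fn_mk]

end AuxLemmas

/-- **Post-measurement states of a UR_ns classical-quantum state are classical-quantum
states of unsteerable assemblages.** -/
theorem post_measurement_URns_is_cq_of_unsteerable
    {X A d ι : Type*} [Fintype X] [Fintype A] [Fintype d] [Fintype ι]
    [DecidableEq X] [DecidableEq A] [DecidableEq d]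
    (ς2 : (A × A) → (X × X) → Matrix (d × d) (d × d) ℂ) (hς : IsURns ς2)
    (π0 π1 : X → ℝ) (hπ0 : IsProbDist π0) (hπ1 : IsProbDist π1)
    (E : ι → Matrix d d ℂ) (hE : IsPOVM E) :
    ∀ (x0' : X) (a0' : A) (i : ι),
      0 < ((FkId x0' a0' (E i) *
              cqState (fun xx : X × X => π0 xx.1 * π1 xx.2) ς2).trace).re →
      ∃ ϱu : A → X → Matrix d d ℂ, IsAssemblage ϱu ∧ Unsteerable ϱu ∧
        (((FkId x0' a0' (E i) *
            cqState (fun xx : X × X => π0 xx.1 * π1 xx.2) ς2).trace).re)⁻¹ •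
          traceOutZ (FkId x0' a0' (E i) *
            cqState (fun xx : X × X => π0 xx.1 * π1 xx.2) ς2) =
        cqState π1 ϱu := by
  intro x0' a0' i hpos
  classical
  have hXne : Nonempty X := by
    by_contra h
    rw [not_nonempty_iff] at h
    simp [Matrix.trace] at hpos
  have hAne : Nonempty A := by
    by_contra h
    rw [not_nonempty_iff] at h
    simp [Matrix.trace] at hpos
  have hdne : Nonempty d := by
    by_contra h
    rw [not_nonempty_iff] at h
    simp [Matrix.trace] at hpos
  obtain ⟨xdef⟩ := hXne
  obtain ⟨m, r, q, σ, hr, hq, hσ, hdec⟩ := hς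
  set M := FkId x0' a0' (E i) * cqState (fun xx : X × X => π0 xx.1 * π1 xx.2) ς2 with hMdef
  set N : ℝ := M.trace.re with hNdef
  set τ : Fin m → Matrix d d ℂ :=
    fun l => Matrix.of fun B1 E1' => ∑ b0, ∑ c0, E i b0 c0 * σ l (c0, B1) (b0, E1') with hτ
  set t : Fin m → ℝ := fun l => ((τ l).trace).re with htdef
  set q0 : Fin m → ℝ := fun l => ∑ a1, q l a0' a1 x0' xdef with hq0def
  set S : ℝ := ∑ l, r l * q0 l * t l with hSdef
  set G : A → X → Matrix d d ℂ :=
    fun a1 x1 => Matrix.of fun B1 E1' =>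
      ∑ b0, ∑ c0, E i b0 c0 * ς2 (a0', a1) (x0', x1) (c0, B1) (b0, E1') with hGdef
  have hτpsd : ∀ l, (τ l).PosSemidef := fun l => aux_psd_tau (hE.1 i) (hσ l).1
  have htnn : ∀ l, 0 ≤ t l := fun l => aux_psd_trace_re_nonneg (hτpsd l)
  have hτtr : ∀ l, (τ l).trace = ((t l : ℝ) : ℂ) := fun l => aux_trace_eq_re (hτpsd l).1
  have hq0eq : ∀ l x1, ∑ a1, q l a0' a1 x0' x1 = q0 l := fun l x1 => (hq l).2.1 a0' x0' x1 xdef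
  have hq0nn : ∀ l, 0 ≤ q0 l := fun l => Finset.sum_nonneg fun a _ => (hq l).1.1 a0' a x0' xdef
  have hGdec : ∀ a1 x1, G a1 x1 = ∑ l, (r l * q l a0' a1 x0' x1) • τ l := by
    intro a1 x1
    ext B1 E1'
    simp only [hGdef, Matrix.of_apply, Matrix.sum_apply, Matrix.smul_apply, hdec,
      Complex.real_smul, smul_eq_mul, hτ]
    simp only [Finset.mul_sum]
    rw [show ∀ (f : d → d → Fin m → ℂ), (∑ x, ∑ y, ∑ z, f x y z) = ∑ z, ∑ x, ∑ y, f x y z from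
      fun f => (Finset.sum_congr rfl fun x _ => Finset.sum_comm).trans Finset.sum_comm]
    refine Finset.sum_congr rfl fun l _ => Finset.sum_congr rfl fun b0 _ =>
      Finset.sum_congr rfl fun c0 _ => ?_
    ring
  have hGtr : ∀ a1 x1, (G a1 x1).trace = ((∑ l, r l * q l a0' a1 x0' x1 * t l : ℝ) : ℂ) := by
    intro a1 x1
    rw [hGdec a1 x1, Matrix.trace_sum]
    push_cast
    refine Finset.sum_congr rfl fun l _ => ?_
    rw [Matrix.trace_smul, hτtr l, Complex.real_smul]
    push_cast
    ring
  have hinner : ∀ x1, ∑ a1, ∑ l, r l * q l a0' a1 x0' x1 * t l = S := by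
    intro x1
    rw [Finset.sum_comm, hSdef]
    refine Finset.sum_congr rfl fun l _ => ?_
    rw [show (∑ a1, r l * q l a0' a1 x0' x1 * t l)
        = (∑ a1, q l a0' a1 x0' x1) * (r l * t l) by
      rw [Finset.sum_mul]; exact Finset.sum_congr rfl fun a1 _ => by ring]
    rw [hq0eq]; ring
  have hMtr : M.trace = ((π0 x0' * S : ℝ) : ℂ) := by
    rw [hMdef, aux_trace_eq_sum_traceOutZ, Fintype.sum_prod_type]
    have step : ∀ x1 : X,
        (∑ w2 : A × d, traceOutZ (FkId x0' a0' (E i) *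
            cqState (fun xx : X × X => π0 xx.1 * π1 xx.2) ς2) (x1, w2) (x1, w2))
        = ((π0 x0' * π1 x1 : ℝ) : ℂ) * ∑ a1, (G a1 x1).trace := by
      intro x1
      rw [Fintype.sum_prod_type, Finset.mul_sum]
      refine Finset.sum_congr rfl fun a1 _ => ?_
      calc (∑ b1, traceOutZ (FkId x0' a0' (E i) *
              cqState (fun xx : X × X => π0 xx.1 * π1 xx.2) ς2) (x1, a1, b1) (x1, a1, b1))
          = ∑ b1, ((π0 x0' * π1 x1 : ℝ) : ℂ) * (G a1 x1 b1 b1) := by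
            refine Finset.sum_congr rfl fun b1 _ => ?_
            rw [aux_K1]
            simp [hGdef]
        _ = ((π0 x0' * π1 x1 : ℝ) : ℂ) * (G a1 x1).trace := by
            rw [← Finset.mul_sum]
            rfl
    rw [Finset.sum_congr rfl fun x1 _ => step x1]
    have : ∀ x1 : X, ((π0 x0' * π1 x1 : ℝ) : ℂ) * ∑ a1, (G a1 x1).trace
        = ((π0 x0' * π1 x1 * S : ℝ) : ℂ) := by
      intro x1
      have : (∑ a1, (G a1 x1).trace) = ((S : ℝ) : ℂ) := by
        rw [show (∑ a1, (G a1 x1).trace)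
            = ((∑ a1, ∑ l, r l * q l a0' a1 x0' x1 * t l : ℝ) : ℂ) by
          push_cast
          exact Finset.sum_congr rfl fun a1 _ => by rw [hGtr]; push_cast; ring]
        rw [hinner]
      rw [this]; push_cast; ring
    rw [Finset.sum_congr rfl fun x1 _ => this x1]
    rw [show (∑ x1, ((π0 x0' * π1 x1 * S : ℝ) : ℂ)) = ((∑ x1, π0 x0' * π1 x1 * S : ℝ) : ℂ) by
      push_cast; rfl]
    congr 1
    calc ∑ x1, π0 x0' * π1 x1 * S = (∑ x1, π1 x1) * (π0 x0' * S) := by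
          rw [Finset.sum_mul]; exact Finset.sum_congr rfl fun x1 _ => by ring
      _ = π0 x0' * S := by rw [hπ1.2, one_mul]
  have hN : N = π0 x0' * S := by rw [hNdef, hMtr, Complex.ofReal_re]
  have hSnn : 0 ≤ S := Finset.sum_nonneg fun l _ =>
    mul_nonneg (mul_nonneg (hr.1 l) (hq0nn l)) (htnn l)
  have hπS : 0 < π0 x0' * S := hN ▸ hpos
  have hπpos : 0 < π0 x0' := by
    rcases (hπ0.1 x0').lt_or_eq with h | h
    · exact h
    · exfalso; rw [← h, zero_mul] at hπS; exact lt_irrefl 0 hπS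
  have hSpos : 0 < S := by
    rcases hSnn.lt_or_eq with h | h
    · exact h
    · exfalso; rw [← h, mul_zero] at hπS; exact lt_irrefl 0 hπS
  set r' : Fin m → ℝ := fun l => r l * q0 l * t l / S with hr'def
  set p' : Fin m → A → X → ℝ :=
    fun l a x => if q0 l = 0 then (Fintype.card A : ℝ)⁻¹ else q l a0' a x0' x / q0 l with hp'def
  set ρ' : Fin m → Matrix d d ℂ :=
    fun l => if t l = 0 then Matrix.diagonal (fun _ => ((Fintype.card d : ℝ)⁻¹ : ℂ))
      else (t l)⁻¹ • τ l with hρ'def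
  set ϱu : A → X → Matrix d d ℂ := fun a x => ∑ l, (r' l * p' l a x) • ρ' l with hϱudef
  have hr'prob : IsProbDist r' := by
    constructor
    · intro l
      exact div_nonneg (mul_nonneg (mul_nonneg (hr.1 l) (hq0nn l)) (htnn l)) hSnn
    · simp only [hr'def]
      rw [← Finset.sum_div, ← hSdef, div_self hSpos.ne']
  have hp'cond : ∀ l, IsCondDist (p' l) := by
    intro l
    constructor
    · intro a x
      simp only [hp'def]
      split_ifs with h
      · positivity
      · exact div_nonneg ((hq l).1.1 _ _ _ _) (hq0nn l)
    · intro x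
      simp only [hp'def]
      split_ifs with h
      · haveI := hAne
        rw [Finset.sum_const, Finset.card_univ, nsmul_eq_mul, mul_inv_cancel₀]
        exact Nat.cast_ne_zero.mpr Fintype.card_ne_zero
      · rw [← Finset.sum_div, hq0eq l x, div_self h]
  have hρ'dens : ∀ l, IsDensity (ρ' l) := by
    intro l
    haveI := hdne
    simp only [hρ'def]
    split_ifs with h
    · constructor
      · refine Matrix.PosSemidef.diagonal fun j => ?_
        rw [Pi.zero_apply, ← Complex.ofReal_inv]
        exact Complex.zero_le_real.2 (by positivity)
      · rw [Matrix.trace_diagonal]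
        rw [Finset.sum_const, Finset.card_univ, nsmul_eq_mul]
        have hcd : ((Fintype.card d : ℝ) : ℂ) ≠ 0 := by
          exact_mod_cast (Nat.cast_ne_zero (R := ℝ)).mpr Fintype.card_ne_zero
        push_cast
        field_simp
    · constructor
      · exact aux_psd_real_smul (inv_nonneg.2 (htnn l)) (hτpsd l)
      · rw [Matrix.trace_smul, hτtr l, Complex.real_smul]
        norm_cast
        field_simp
  have hKEY : ∀ a x, ϱu a x = (N⁻¹ * π0 x0') • G a x := by
    intro a x
    simp only [hϱudef]
    rw [hGdec a x, Finset.smul_sum]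
    refine Finset.sum_congr rfl fun l _ => ?_
    rw [smul_smul]
    by_cases hq0l : q0 l = 0
    · have hqz : q l a0' a x0' x = 0 := by
        have hsum := hq0eq l x
        rw [hq0l] at hsum
        exact (Finset.sum_eq_zero_iff_of_nonneg
          (fun a1 _ => (hq l).1.1 a0' a1 x0' x)).mp hsum a (Finset.mem_univ a)
      simp [hr'def, hq0l, hqz]
    · by_cases htl : t l = 0
      · have hτz : τ l = 0 := aux_psd_eq_zero_of_trace_re (hτpsd l) htl
        simp [hr'def, htl, hτz]
      · simp only [hr'def, hp'def, hρ'def, if_neg hq0l, if_neg htl]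
        rw [smul_smul]
        congr 1
        rw [hN]
        field_simp
  have hassem : IsAssemblage ϱu := by
    constructor
    · intro a x
      simp only [hϱudef]
      exact aux_psd_sum _ _ fun l _ =>
        aux_psd_real_smul (mul_nonneg (hr'prob.1 l) ((hp'cond l).1 a x)) (hρ'dens l).1
    · intro x
      simp only [hϱudef, Matrix.trace_sum, Matrix.trace_smul]
      have h1 : ∀ l, (ρ' l).trace = 1 := fun l => (hρ'dens l).2
      simp only [h1, smul_eq_mul]
      have hreal : ∑ l, ∑ a, r' l * p' l a x = 1 := by
        calc ∑ l, ∑ a, r' l * p' l a x = ∑ l, r' l * ∑ a, p' l a x := by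
              refine Finset.sum_congr rfl fun l _ => (Finset.mul_sum _ _ _).symm
          _ = ∑ l, r' l := by
              refine Finset.sum_congr rfl fun l _ => ?_
              rw [(hp'cond l).2 x, mul_one]
          _ = 1 := hr'prob.2
      calc ∑ a, ∑ l, ((r' l * p' l a x : ℝ) • (1 : ℂ))
          = ((∑ a, ∑ l, r' l * p' l a x : ℝ) : ℂ) := by
            push_cast [Complex.real_smul]
            simp
        _ = 1 := by rw [Finset.sum_comm, hreal, Complex.ofReal_one]
  refine ⟨ϱu, hassem, ⟨m, r', p', ρ', hr'prob, hp'cond, hρ'dens, fun a x => rfl⟩, ?_⟩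
  ext ⟨x1, a1, b1⟩ ⟨y1, c1, e1⟩
  rw [Matrix.smul_apply, hMdef]
  rw [aux_K1]
  simp only [cqState, hKEY a1 x1, Matrix.smul_apply]
  split_ifs with hcond
  · simp only [hGdef, Matrix.of_apply, Complex.real_smul]
    push_cast
    ring
  · rw [smul_zero]


end
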